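/- Let K : ℝ → ℝ be continuously differentiable and define K̄(z, z̃) = (z̃/z)·|K(z̃ − z) − K(z̃ + z)| for z, z̃ > 0. Then sup over z̃ > 0 of ∫₀^∞ K̄(z, z̃) dz is bounded by a universal constant times ( ∫_ℝ |K(z)| dz + sup_{z ∈ ℝ} z²·|K′(z)| ). -/

import Mathlib

open MeasureTheory Set

/-- Kernel lemma: `K̄(z, zt) = (zt/z)|K(zt−z) − K(zt+z)|` satisfies
`sup_{zt>0} ∫₀^∞ K̄(z,zt) dz ≲ ∫_ℝ |K| + sup_z z²|K′(z)|`. -/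
theorem stmt0 :
    ∃ C : ℝ, 0 < C ∧
      ∀ (K : ℝ → ℝ), ContDiff ℝ 1 K → Integrable K →
        ∀ M : ℝ, (∀ z : ℝ, z ^ 2 * |deriv K z| ≤ M) →
          ∀ zt : ℝ, 0 < zt →
            ∫ z in Ioi (0 : ℝ), (zt / z) * |K (zt - z) - K (zt + z)| ≤
              C * ((∫ z : ℝ, |K z|) + M) := by
  refine ⟨8, by norm_num, ?_⟩
  intro K hK hKint M hM zt hzt
  have hM0 : 0 ≤ M := le_trans (by positivity) (hM 1)
  have hI0 : 0 ≤ ∫ z : ℝ, |K z| := integral_nonneg fun z => abs_nonneg _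
  set f : ℝ → ℝ := fun z => (zt / z) * |K (zt - z) - K (zt + z)| with hf
  set g : ℝ → ℝ := fun z => (Ioc (0:ℝ) (zt/2)).indicator (fun _ => 8*M/zt) z
      + 2 * (|K (zt - z)| + |K (zt + z)|) with hg
  have hK1 : Integrable (fun z : ℝ => |K (zt - z)|) := (hKint.comp_sub_left zt).abs
  have hK2 : Integrable (fun z : ℝ => |K (zt + z)|) := (hKint.comp_add_left zt).abs
  have hInd : Integrable ((Ioc (0:ℝ) (zt/2)).indicator (fun _ => 8*M/zt)) := by
    rw [integrable_indicator_iff measurableSet_Ioc]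
    exact integrableOn_const measure_Ioc_lt_top.ne
  have hgint : Integrable g := by
    exact hInd.add (((hK1.add hK2).const_mul 2))
  -- pointwise bound on Ioi 0
  have hfg : ∀ z ∈ Ioi (0:ℝ), f z ≤ g z := by
    intro z hz
    have hz0 : (0:ℝ) < z := hz
    have habs : |K (zt - z) - K (zt + z)| ≤ |K (zt - z)| + |K (zt + z)| := abs_sub _ _
    by_cases hcase : z ≤ zt / 2
    · -- small z : mean value theorem
      have hdiff : ∀ x ∈ Icc (zt - z) (zt + z), DifferentiableAt ℝ K x := fun x _ =>
        hK.differentiable one_ne_zero x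
      have hbound : ∀ x ∈ Icc (zt - z) (zt + z), ‖deriv K x‖ ≤ 4 * M / zt ^ 2 := by
        intro x hx
        have hx1 : zt / 2 ≤ x := by
          have := hx.1; linarith
        have hx0 : 0 < x := lt_of_lt_of_le (by linarith) hx1
        have h1 : x ^ 2 * |deriv K x| ≤ M := hM x
        have h2 : (zt / 2) ^ 2 ≤ x ^ 2 := by nlinarith
        have h3 : (zt / 2) ^ 2 * |deriv K x| ≤ M :=
          le_trans (by nlinarith [abs_nonneg (deriv K x)]) h1
        rw [Real.norm_eq_abs, le_div_iff₀ (show (0:ℝ) < zt ^ 2 by positivity)]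
        nlinarith [abs_nonneg (deriv K x)]
      have hmvt := (convex_Icc (zt - z) (zt + z)).norm_image_sub_le_of_norm_deriv_le
        hdiff hbound (x := zt - z) (y := zt + z)
        ⟨le_rfl, by linarith⟩ ⟨by linarith, le_rfl⟩
      rw [Real.norm_eq_abs, Real.norm_eq_abs] at hmvt
      have h4 : |zt + z - (zt - z)| = 2 * z := by
        rw [abs_of_nonneg (by linarith)]; ring
      rw [h4] at hmvt
      have h5 : |K (zt - z) - K (zt + z)| ≤ 4 * M / zt ^ 2 * (2 * z) := by
        rw [abs_sub_comm]; exact hmvt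
      have h6 : f z ≤ (zt / z) * (4 * M / zt ^ 2 * (2 * z)) := by
        apply mul_le_mul_of_nonneg_left h5 (by positivity)
      have h7 : (zt / z) * (4 * M / zt ^ 2 * (2 * z)) = 8 * M / zt := by
        field_simp; ring
      have h8 : g z = 8 * M / zt + 2 * (|K (zt - z)| + |K (zt + z)|) := by
        rw [hg]; simp only [indicator_of_mem (mem_Ioc.mpr ⟨hz0, hcase⟩)]
      rw [h8]
      have : (0:ℝ) ≤ 2 * (|K (zt - z)| + |K (zt + z)|) := by positivity
      calc f z ≤ 8 * M / zt := h7 ▸ h6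
        _ ≤ _ := by linarith
    · -- large z : zt / z ≤ 2
      have hzz : zt / z ≤ 2 := by
        rw [div_le_iff₀ hz0]; linarith [not_le.mp hcase]
      have h1 : f z ≤ 2 * (|K (zt - z)| + |K (zt + z)|) := by
        calc f z ≤ (zt / z) * (|K (zt - z)| + |K (zt + z)|) :=
              mul_le_mul_of_nonneg_left habs (by positivity)
          _ ≤ 2 * (|K (zt - z)| + |K (zt + z)|) :=
              mul_le_mul_of_nonneg_right hzz (by positivity)
      have h2 : (0:ℝ) ≤ (Ioc (0:ℝ) (zt/2)).indicator (fun _ => 8*M/zt) z :=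
        indicator_nonneg (fun _ _ => by positivity) z
      rw [hg]; dsimp only; linarith
  have hnonneg : 0 ≤ᶠ[ae (volume.restrict (Ioi (0:ℝ)))] f := by
    refine (ae_restrict_iff' measurableSet_Ioi).mpr (ae_of_all _ fun z hz => ?_)
    have : (0:ℝ) < z := hz
    positivity
  have hfg' : f ≤ᶠ[ae (volume.restrict (Ioi (0:ℝ)))] g :=
    (ae_restrict_iff' measurableSet_Ioi).mpr (ae_of_all _ hfg)
  have hmain : ∫ z in Ioi (0:ℝ), f z ≤ ∫ z in Ioi (0:ℝ), g z :=
    integral_mono_of_nonneg hnonneg hgint.integrableOn hfg'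
  -- compute ∫ g
  have hsplit : ∫ z in Ioi (0:ℝ), g z
      = (∫ z in Ioi (0:ℝ), (Ioc (0:ℝ) (zt/2)).indicator (fun _ => 8*M/zt) z)
        + ∫ z in Ioi (0:ℝ), 2 * (|K (zt - z)| + |K (zt + z)|) := by
    rw [hg]
    exact integral_add hInd.integrableOn (((hK1.add hK2).const_mul 2)).integrableOn
  have hind : (∫ z in Ioi (0:ℝ), (Ioc (0:ℝ) (zt/2)).indicator (fun _ => 8*M/zt) z) = 4 * M := by
    rw [setIntegral_indicator measurableSet_Ioc]
    have : Ioi (0:ℝ) ∩ Ioc 0 (zt/2) = Ioc 0 (zt/2) :=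
      inter_eq_right.mpr (Ioc_subset_Ioi_self)
    rw [this, setIntegral_const, measureReal_def, Real.volume_Ioc]
    rw [ENNReal.toReal_ofReal (by linarith)]
    field_simp
    rw [smul_eq_mul]; field_simp; ring
  have ht1 : ∫ z in Ioi (0:ℝ), |K (zt - z)| ≤ ∫ z : ℝ, |K z| := by
    calc ∫ z in Ioi (0:ℝ), |K (zt - z)| ≤ ∫ z : ℝ, |K (zt - z)| :=
          setIntegral_le_integral hK1 (ae_of_all _ fun z => abs_nonneg _)
      _ = ∫ z : ℝ, |K z| := integral_sub_left_eq_self (fun z => |K z|) volume zt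
  have ht2 : ∫ z in Ioi (0:ℝ), |K (zt + z)| ≤ ∫ z : ℝ, |K z| := by
    calc ∫ z in Ioi (0:ℝ), |K (zt + z)| ≤ ∫ z : ℝ, |K (zt + z)| :=
          setIntegral_le_integral hK2 (ae_of_all _ fun z => abs_nonneg _)
      _ = ∫ z : ℝ, |K z| := integral_add_left_eq_self (fun z => |K z|) zt
  have ht : ∫ z in Ioi (0:ℝ), 2 * (|K (zt - z)| + |K (zt + z)|)
      ≤ 4 * ∫ z : ℝ, |K z| := by
    rw [integral_const_mul, integral_add hK1.integrableOn hK2.integrableOn]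
    linarith
  calc ∫ z in Ioi (0:ℝ), f z ≤ ∫ z in Ioi (0:ℝ), g z := hmain
    _ = _ + _ := hsplit
    _ ≤ 4 * M + 4 * ∫ z : ℝ, |K z| := by rw [hind]; linarith
    _ ≤ 8 * ((∫ z : ℝ, |K z|) + M) := by linarith
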